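/- Let (X,B,b) be a coarse proximity space. For unbounded A, B ⊆ X: A φ B if and only if A' = B', where A' and B' are the traces of A and B in the boundary UX. -/
import Mathlib


open Set

universe u
variable {X : Type u}

/-- The axioms of a coarse proximity structure: a bornology `B` (contains singletons,
closed under subsets and finite unions) and a relation `b` satisfying symmetry,
unboundedness of related sets, relatedness of sets with unbounded intersection,
the union axiom, and the strong axiom. -/
structure IsCoarseProximity (B : Set (Set X)) (b : Set X → Set X → Prop) : Prop where
  singleton_mem : ∀ x : X, {x} ∈ B
  subset_mem : ∀ A C : Set X, A ∈ B → C ⊆ A → C ∈ B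
  union_mem : ∀ A C : Set X, A ∈ B → C ∈ B → A ∪ C ∈ B
  symm : ∀ A C : Set X, b A C → b C A
  unbounded_of_rel : ∀ A C : Set X, b A C → A ∉ B ∧ C ∉ B
  rel_of_inter : ∀ A C : Set X, A ∩ C ∉ B → b A C
  union_iff : ∀ A C D : Set X, b (A ∪ C) D ↔ b A D ∨ b C D
  strong : ∀ A C : Set X, ¬ b A C → ∃ E : Set X, ¬ b A E ∧ ¬ b (univ \ E) C

/-- A coarse proximity space structure on `X`. -/
structure CoarseProximity (X : Type u) where
  B : Set (Set X)
  b : Set X → Set X → Prop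
  isCP : IsCoarseProximity B b

/-- The weak asymptotic resemblance induced by a coarse proximity. -/
def phi (cp : CoarseProximity X) (A C : Set X) : Prop :=
  (∀ C' ⊆ C, C' ∉ cp.B → cp.b A C') ∧ (∀ A' ⊆ A, A' ∉ cp.B → cp.b A' C)

/-- The discrete extension of the coarse proximity `b`. -/
def deltaExt (cp : CoarseProximity X) (A C : Set X) : Prop :=
  (A ∩ C).Nonempty ∨ cp.b A C

/-- A cluster in the proximity space given by the discrete extension of `b`:
any two members are close, any set close to all members is a member, and a union
belongs only if one of the pieces does. -/
structure IsCluster (cp : CoarseProximity X) (σ : Set (Set X)) : Prop where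
  close : ∀ A ∈ σ, ∀ C ∈ σ, deltaExt cp A C
  mem_of_close : ∀ C : Set X, (∀ A ∈ σ, deltaExt cp C A) → C ∈ σ
  union_cases : ∀ A C : Set X, A ∪ C ∈ σ → A ∈ σ ∨ C ∈ σ

/-- The boundary `𝒰X` of the coarse proximity space: clusters (in the Smirnov
compactification of the discrete extension) containing no bounded set. -/
def UX (cp : CoarseProximity X) : Set (Set (Set X)) :=
  {σ | IsCluster cp σ ∧ ∀ A ∈ σ, A ∉ cp.B}

/-- The trace `A' = cl_𝔛(A) ∩ 𝒰X` of `A ⊆ X` in the boundary; a cluster of the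
boundary lies in the closure of `A` in the Smirnov compactification iff `A` is a
member of the cluster. -/
def trace (cp : CoarseProximity X) (A : Set X) : Set (Set (Set X)) :=
  {σ ∈ UX cp | A ∈ σ}

/-- Relative closure in a subspace `Y` of the Smirnov compactification: a cluster
`σ ∈ Y` lies in the closure of `S ⊆ Y` iff every subset of `X` absorbing `S`
(i.e. belonging to every cluster of `S`) belongs to `σ`. -/
def clRel (Y S : Set (Set (Set X))) : Set (Set (Set X)) :=
  {σ ∈ Y | ∀ C : Set X, (∀ τ ∈ S, C ∈ τ) → C ∈ σ}

/-- A subset of `Y` is relatively closed iff it contains its relative closure. -/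
def relClosed (Y K : Set (Set (Set X))) : Prop :=
  K ⊆ Y ∧ clRel Y K ⊆ K

/-- Interior in the boundary `𝒰X`. -/
def intU (cp : CoarseProximity X) (S : Set (Set (Set X))) : Set (Set (Set X)) :=
  UX cp \ clRel (UX cp) (UX cp \ S)

/-- Closed subsets of the boundary `𝒰X`. -/
def IsClosedU (cp : CoarseProximity X) (K : Set (Set (Set X))) : Prop :=
  relClosed (UX cp) K

/-- Open subsets of the boundary `𝒰X`. -/
def IsOpenU (cp : CoarseProximity X) (U : Set (Set (Set X))) : Prop :=
  U ⊆ UX cp ∧ IsClosedU cp (UX cp \ U)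

section Aux

variable (cp : CoarseProximity X)

lemma b_mono {A A₁ C C₁ : Set X} (h : cp.b A C) (hA : A ⊆ A₁) (hC : C ⊆ C₁) :
    cp.b A₁ C₁ := by
  have h1 : cp.b A₁ C := by
    have := (cp.isCP.union_iff A A₁ C).2 (Or.inl h)
    rwa [union_eq_self_of_subset_left hA] at this
  have h2 := cp.isCP.symm _ _ h1
  have h3 : cp.b C₁ A₁ := by
    have := (cp.isCP.union_iff C C₁ A₁).2 (Or.inl h2)
    rwa [union_eq_self_of_subset_left hC] at this
  exact cp.isCP.symm _ _ h3

lemma inter_bounded {A C : Set X} (h : ¬ cp.b A C) : A ∩ C ∈ cp.B := by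
  by_contra hb
  exact h (b_mono cp (cp.isCP.rel_of_inter (A ∩ C) (A ∩ C) (by simpa using hb))
    inter_subset_left inter_subset_right)

lemma delta_symm {A C : Set X} (h : deltaExt cp A C) : deltaExt cp C A := by
  rcases h with h | h
  · exact Or.inl (by rwa [inter_comm])
  · exact Or.inr (cp.isCP.symm _ _ h)

lemma delta_mono {A A₁ C C₁ : Set X} (h : deltaExt cp A C) (hA : A ⊆ A₁) (hC : C ⊆ C₁) :
    deltaExt cp A₁ C₁ := by
  rcases h with h | h
  · exact Or.inl (h.mono (inter_subset_inter hA hC))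
  · exact Or.inr (b_mono cp h hA hC)

lemma delta_strong {A C : Set X} (h : ¬ deltaExt cp A C) :
    ∃ E : Set X, ¬ deltaExt cp A E ∧ ¬ deltaExt cp (univ \ E) C := by
  have hdisj : A ∩ C = ∅ := by
    by_contra hne
    exact h (Or.inl (nonempty_iff_ne_empty.2 hne))
  have hb : ¬ cp.b A C := fun hb => h (Or.inr hb)
  obtain ⟨E₀, hAE₀, hE₀C⟩ := cp.isCP.strong A C hb
  refine ⟨(E₀ ∪ C) \ A, ?_, ?_⟩
  · rintro (⟨x, hxA, hxE, hxA'⟩ | hbb)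
    · exact hxA' hxA
    · have : cp.b A (E₀ ∪ C) := b_mono cp hbb (subset_refl _) diff_subset
      rcases (cp.isCP.union_iff E₀ C A).1 (cp.isCP.symm _ _ this) with h1 | h1
      · exact hAE₀ (cp.isCP.symm _ _ h1)
      · exact hb (cp.isCP.symm _ _ h1)
  · have hcompl : univ \ ((E₀ ∪ C) \ A) = (univ \ (E₀ ∪ C)) ∪ A := by
      ext x
      simp only [mem_diff, mem_union, mem_univ, true_and]
      tauto
    rw [hcompl]
    rintro (⟨x, hx1, hx2⟩ | hbb)
    · rcases hx1 with hx1 | hx1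
      · exact hx1.2 (Or.inr hx2)
      · exact absurd hdisj (nonempty_iff_ne_empty.1 ⟨x, hx1, hx2⟩)
    · rcases (cp.isCP.union_iff _ _ _).1 hbb with h1 | h1
      · exact hE₀C (b_mono cp h1 (diff_subset_diff_right subset_union_left) (subset_refl _))
      · exact hb h1

/-- The cluster generated by an ultrafilter. -/
def clusterOf (F : Ultrafilter X) : Set (Set X) :=
  {C | ∀ S ∈ F, deltaExt cp C S}

lemma isCluster_clusterOf (F : Ultrafilter X) : IsCluster cp (clusterOf cp F) := by
  have hmem : ∀ S ∈ F, S ∈ clusterOf cp F := by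
    intro S hS T hT
    exact Or.inl (Filter.nonempty_of_mem (F.inter_sets hS hT))
  constructor
  · intro A hA C hC
    by_contra hAC
    obtain ⟨E, h1, h2⟩ := delta_strong cp hAC
    rcases F.mem_or_compl_mem E with hE | hE
    · exact h1 (hA E hE)
    · have := hC Eᶜ hE
      rw [Set.compl_eq_univ_diff] at this
      exact h2 (delta_symm cp this)
  · intro C h S hS
    exact h S (hmem S hS)
  · intro A C h
    by_contra hn
    push_neg at hn
    obtain ⟨hnA, hnC⟩ := hn
    simp only [clusterOf, mem_setOf_eq, not_forall] at hnA hnC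
    obtain ⟨S1, hS1, hd1⟩ := hnA
    obtain ⟨S2, hS2, hd2⟩ := hnC
    have := h (S1 ∩ S2) (F.inter_sets hS1 hS2)
    rcases this with ⟨x, hx1, hx2⟩ | hbb
    · rcases hx1 with hx | hx
      · exact hd1 (Or.inl ⟨x, hx, hx2.1⟩)
      · exact hd2 (Or.inl ⟨x, hx, hx2.2⟩)
    · rcases (cp.isCP.union_iff _ _ _).1 hbb with h1 | h1
      · exact hd1 (Or.inr (b_mono cp h1 (subset_refl _) inter_subset_left))
      · exact hd2 (Or.inr (b_mono cp h1 (subset_refl _) inter_subset_right))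

lemma cluster_upward {σ : Set (Set X)} (hσ : IsCluster cp σ) {C C₁ : Set X}
    (hC : C ∈ σ) (h : C ⊆ C₁) : C₁ ∈ σ :=
  hσ.mem_of_close C₁ fun A hA => delta_mono cp (hσ.close C hC A hA) h (subset_refl _)

/-- Every unbounded set is contained in a boundary cluster (when X is nonempty). -/
lemma exists_boundary_cluster (x₀ : X) {A₀ : Set X} (hA₀ : A₀ ∉ cp.B) :
    ∃ σ ∈ UX cp, A₀ ∈ σ := by
  have hempty : (∅ : Set X) ∈ cp.B :=
    cp.isCP.subset_mem {x₀} ∅ (cp.isCP.singleton_mem x₀) (empty_subset _)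
  let f : Filter X :=
    { sets := {S | ∃ D ∈ cp.B, A₀ \ D ⊆ S}
      univ_sets := ⟨∅, hempty, subset_univ _⟩
      sets_of_superset := fun ⟨D, hD, hsub⟩ hST => ⟨D, hD, hsub.trans hST⟩
      inter_sets := by
        rintro S T ⟨D1, h1, s1⟩ ⟨D2, h2, s2⟩
        refine ⟨D1 ∪ D2, cp.isCP.union_mem _ _ h1 h2, fun x hx => ?_⟩
        exact ⟨s1 ⟨hx.1, fun h => hx.2 (Or.inl h)⟩, s2 ⟨hx.1, fun h => hx.2 (Or.inr h)⟩⟩ }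
  have hmemf : ∀ D ∈ cp.B, A₀ \ D ∈ f := fun D hD => ⟨D, hD, subset_refl _⟩
  have hne : f.NeBot := by
    rw [← Filter.forall_mem_nonempty_iff_neBot]
    rintro S ⟨D, hD, hsub⟩
    rcases (A₀ \ D).eq_empty_or_nonempty with he | hne
    · exact absurd (cp.isCP.subset_mem D A₀ hD (diff_eq_empty.1 he)) hA₀
    · exact hne.mono hsub
  let F := Ultrafilter.of f
  have hFf : ∀ S ∈ f, S ∈ F := fun S hS => Ultrafilter.of_le f hS
  refine ⟨clusterOf cp F, ⟨isCluster_clusterOf cp F, ?_⟩, ?_⟩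
  · intro D hD hDB
    have := hD (A₀ \ D) (hFf _ (hmemf D hDB))
    rcases this with ⟨x, hx1, hx2, hx3⟩ | hbb
    · exact hx3 hx1
    · exact (cp.isCP.unbounded_of_rel _ _ hbb).1 hDB
  · intro S hS
    have hA₀F : A₀ ∈ F := hFf A₀ (by simpa using hmemf ∅ hempty)
    exact Or.inl (Filter.nonempty_of_mem (F.inter_sets hA₀F hS))

lemma phi_b {A B C : Set X} (hphi : phi cp A B) (hAC : cp.b A C) : cp.b B C := by
  by_contra hBC
  obtain ⟨E, h1, h2⟩ := cp.isCP.strong B C hBC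
  have hsplit : cp.b ((A ∩ E) ∪ (A \ E)) C := by rwa [inter_union_diff]
  rcases (cp.isCP.union_iff _ _ _).1 hsplit with hc | hc
  · have hub : A ∩ E ∉ cp.B := (cp.isCP.unbounded_of_rel _ _ hc).1
    have := hphi.2 (A ∩ E) inter_subset_left hub
    exact h1 (cp.isCP.symm _ _ (b_mono cp this inter_subset_right (subset_refl _)))
  · exact h2 (b_mono cp hc (fun x hx => ⟨mem_univ x, hx.2⟩) (subset_refl _))

lemma boundary_b {σ : Set (Set X)} (hσ : σ ∈ UX cp) {A C : Set X}
    (hA : A ∈ σ) (hC : C ∈ σ) : cp.b A C := by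
  by_contra h
  have hbdd : A ∩ C ∈ cp.B := inter_bounded cp h
  have hAC : A ∩ C ∉ σ := fun hm => hσ.2 _ hm hbdd
  have hAd : A \ C ∈ σ := by
    rcases hσ.1.union_cases (A \ C) (A ∩ C) (by rwa [diff_union_inter]) with h1 | h1
    · exact h1
    · exact absurd h1 hAC
  have hCd : C \ A ∈ σ := by
    have hCA : C ∩ A ∉ σ := fun hm => hσ.2 _ hm (by rwa [inter_comm])
    rcases hσ.1.union_cases (C \ A) (C ∩ A) (by rwa [diff_union_inter]) with h1 | h1
    · exact h1
    · exact absurd h1 hCA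
  rcases hσ.1.close _ hAd _ hCd with ⟨x, hx1, hx2⟩ | hbb
  · exact hx2.2 hx1.1
  · exact h (b_mono cp hbb diff_subset diff_subset)

lemma phi_symm {A B : Set X} (h : phi cp A B) : phi cp B A :=
  ⟨fun C' hC' hCb => cp.isCP.symm _ _ (h.2 C' hC' hCb),
   fun A' hA' hAb => cp.isCP.symm _ _ (h.1 A' hA' hAb)⟩

lemma trace_subset_of_phi {A B : Set X} (hphi : phi cp A B) :
    trace cp A ⊆ trace cp B := by
  rintro σ ⟨hσU, hAσ⟩
  refine ⟨hσU, hσU.1.mem_of_close B fun C hC => ?_⟩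
  exact Or.inr (phi_b cp hphi (boundary_b cp hσU hAσ hC))

end Aux

/-- for unbounded `A, B ⊆ X`, `A φ B` iff `A' = B'` in the
boundary `𝒰X`. -/
theorem phi_iff_traces_eq (cp : CoarseProximity X) (A B : Set X)
    (hA : A ∉ cp.B) (hB : B ∉ cp.B) :
    phi cp A B ↔ trace cp A = trace cp B := by
  by_cases hX : Nonempty X
  · obtain ⟨x₀⟩ := hX
    constructor
    · intro hphi
      exact Subset.antisymm (trace_subset_of_phi cp hphi)
        (trace_subset_of_phi cp (phi_symm cp hphi))
    · intro heq
      constructor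
      · intro C' hC'B hC'b
        by_contra hAC'
        have hbdd : A ∩ C' ∈ cp.B := inter_bounded cp hAC'
        have hC'' : C' \ A ∉ cp.B := by
          intro hm
          refine hC'b (cp.isCP.subset_mem ((C' \ A) ∪ (A ∩ C')) C'
            (cp.isCP.union_mem _ _ hm hbdd) ?_)
          intro x hx
          by_cases hxA : x ∈ A
          · exact Or.inr ⟨hxA, hx⟩
          · exact Or.inl ⟨hx, hxA⟩
        obtain ⟨σ, hσU, hmem⟩ := exists_boundary_cluster cp x₀ hC''
        have hBσ : B ∈ σ := cluster_upward cp hσU.1 hmem (diff_subset.trans hC'B)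
        have hAσ : A ∈ σ := by
          have : σ ∈ trace cp B := ⟨hσU, hBσ⟩
          rw [← heq] at this
          exact this.2
        rcases hσU.1.close A hAσ _ hmem with ⟨x, hx1, hx2⟩ | hbb
        · exact hx2.2 hx1
        · exact hAC' (b_mono cp hbb (subset_refl _) diff_subset)
      · intro A' hA'A hA'b
        by_contra hA'B
        have hbdd : A' ∩ B ∈ cp.B := inter_bounded cp hA'B
        have hA'' : A' \ B ∉ cp.B := by
          intro hm
          refine hA'b (cp.isCP.subset_mem ((A' \ B) ∪ (A' ∩ B)) A'
            (cp.isCP.union_mem _ _ hm hbdd) ?_)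
          intro x hx
          by_cases hxB : x ∈ B
          · exact Or.inr ⟨hx, hxB⟩
          · exact Or.inl ⟨hx, hxB⟩
        obtain ⟨σ, hσU, hmem⟩ := exists_boundary_cluster cp x₀ hA''
        have hAσ : A ∈ σ := cluster_upward cp hσU.1 hmem (diff_subset.trans hA'A)
        have hBσ : B ∈ σ := by
          have : σ ∈ trace cp A := ⟨hσU, hAσ⟩
          rw [heq] at this
          exact this.2
        rcases hσU.1.close _ hmem B hBσ with ⟨x, hx1, hx2⟩ | hbb
        · exact hx1.2 hx2
        · exact hA'B (b_mono cp hbb diff_subset (subset_refl _))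
  · have hAB : A = B := by
      ext x
      exact absurd ⟨x⟩ hX
    subst hAB
    constructor
    · intro _; rfl
    · intro _
      constructor
      · intro C' hC' hCb
        exact cp.isCP.rel_of_inter A C' (by rwa [inter_eq_right.mpr hC'])
      · intro A' hA' hAb
        exact cp.isCP.rel_of_inter A' A (by rwa [inter_eq_left.mpr hA'])
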